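/- Theorem 1, third case (explicit part): Without the monotone first step, the fully explicit (θ = 0) Zalesak FCT scheme is not TVD for any CFL number: for every a ≠ 0 and every λ > 0 with λ|a| ≤ 1, there exists a grid function u with TV(u) < ∞ such that the grid function v defined by v_j = u_j − λ[f̂_{j+1/2}(u) − f̂_{j−1/2}(u)] satisfies TV(v) > TV(u). -/

import Mathlib

set_option maxHeartbeats 1000000

noncomputable def TV (u : ℤ → ℝ) : ENNReal :=
  ∑' j : ℤ, ENNReal.ofReal |u (j + 1) - u j|

noncomputable def fluxAD (a : ℝ) (w : ℤ → ℝ) (j : ℤ) : ℝ :=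
  |a| / 2 * (w (j + 1) - w j)

noncomputable def fluxC (a lam : ℝ) (w : ℤ → ℝ) (j : ℤ) : ℝ :=
  Real.sign (fluxAD a w j) *
    max 0 (min (Real.sign (fluxAD a w j) * (lam⁻¹ * (w j - w (j - 1))))
      (min |fluxAD a w j|
        (Real.sign (fluxAD a w j) * (lam⁻¹ * (w (j + 2) - w (j + 1))))))

noncomputable def numFlux (a lam : ℝ) (w : ℤ → ℝ) (j : ℤ) : ℝ :=
  (1 / 2) * (a * (w j + w (j + 1)) - |a| * (w (j + 1) - w j)) + fluxC a lam w j

/-- the test profile -/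
def U (α : ℝ) : ℤ → ℝ := fun j =>
  if j = 0 then -α else if j = 1 then α - 1 else if j = 2 then -1
  else if j = 3 then α - 1 else if j = 4 then -α else 0

lemma fluxC_const (a lam : ℝ) (w : ℤ → ℝ) (j : ℤ) (h : w (j + 1) = w j) :
    fluxC a lam w j = 0 := by
  unfold fluxC fluxAD; rw [h]; simp

lemma fluxC_zero_left (a lam : ℝ) (w : ℤ → ℝ) (j : ℤ)
    (h : Real.sign (fluxAD a w j) * (lam⁻¹ * (w j - w (j - 1))) ≤ 0) :
    fluxC a lam w j = 0 := by
  unfold fluxC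
  rw [max_eq_left ((min_le_left _ _).trans h), mul_zero]

lemma fluxC_zero_right (a lam : ℝ) (w : ℤ → ℝ) (j : ℤ)
    (h : Real.sign (fluxAD a w j) * (lam⁻¹ * (w (j + 2) - w (j + 1))) ≤ 0) :
    fluxC a lam w j = 0 := by
  unfold fluxC
  rw [max_eq_left ((min_le_right _ _).trans ((min_le_right _ _).trans h)), mul_zero]

lemma fluxC_eval_pos (a lam : ℝ) (w : ℤ → ℝ) (j : ℤ)
    (hAD : 0 < fluxAD a w j)
    (hx : w (j + 2) - w (j + 1) = w j - w (j - 1))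
    (h0 : 0 ≤ lam⁻¹ * (w j - w (j - 1)))
    (hle : lam⁻¹ * (w j - w (j - 1)) ≤ fluxAD a w j) :
    fluxC a lam w j = lam⁻¹ * (w j - w (j - 1)) := by
  unfold fluxC
  rw [Real.sign_of_pos hAD, abs_of_pos hAD, hx]
  simp only [one_mul]
  rw [min_eq_right hle, min_self, max_eq_right h0]

lemma fluxC_eval_neg (a lam : ℝ) (w : ℤ → ℝ) (j : ℤ)
    (hAD : fluxAD a w j < 0)
    (hx : w (j + 2) - w (j + 1) = w j - w (j - 1))
    (h0 : lam⁻¹ * (w j - w (j - 1)) ≤ 0)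
    (hle : fluxAD a w j ≤ lam⁻¹ * (w j - w (j - 1))) :
    fluxC a lam w j = lam⁻¹ * (w j - w (j - 1)) := by
  unfold fluxC
  rw [Real.sign_of_neg hAD, abs_of_neg hAD, hx,
    show (-1 : ℝ) * (lam⁻¹ * (w j - w (j - 1))) = -(lam⁻¹ * (w j - w (j - 1))) from by ring,
    min_eq_right (neg_le_neg hle), min_self, max_eq_right (by linarith)]
  ring

theorem zalesak_explicit_not_TVD (a : ℝ) (ha : a ≠ 0) (lam : ℝ) (hlam : 0 < lam)
    (hCFL : lam * |a| ≤ 1) :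
    ∃ u : ℤ → ℝ, TV u < ⊤ ∧
      TV u < TV (fun j => u j - lam * (numFlux a lam u j - numFlux a lam u (j - 1))) := by
  have hb : 0 < |a| := abs_pos.mpr ha
  set α : ℝ := lam * |a| / 8 with hα_def
  have hα0 : 0 < α := by positivity
  have hα8 : α ≤ 1 / 8 := by rw [hα_def]; linarith
  have hlaminv : lam⁻¹ * α = |a| / 8 := by
    rw [hα_def]; field_simp
  clear_value α
  -- zero values of U
  have hUz : ∀ j : ℤ, j < 0 ∨ 4 < j → U α j = 0 := by
    intro j hj
    unfold U
    rw [if_neg (by omega), if_neg (by omega), if_neg (by omega), if_neg (by omega),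
      if_neg (by omega)]
  -- TV of U
  have hU_TV : TV (U α) = ENNReal.ofReal 2 := by
    unfold TV
    rw [tsum_eq_sum (s := ({-1, 0, 1, 2, 3, 4} : Finset ℤ)) (by
      intro j hj
      simp only [Finset.mem_insert, Finset.mem_singleton] at hj
      push_neg at hj
      rw [hUz j (by omega), hUz (j + 1) (by omega)]
      simp)]
    rw [← ENNReal.ofReal_sum_of_nonneg (by intro i _; positivity)]
    congr 1
    have e1 : U α 0 - U α (-1) = -α := by norm_num [U]
    have e2 : U α 1 - U α 0 = 2 * α - 1 := by norm_num [U]; ring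
    have e3 : U α 2 - U α 1 = -α := by norm_num [U]; ring
    have e4 : U α 3 - U α 2 = α := by norm_num [U]
    have e5 : U α 4 - U α 3 = 1 - 2 * α := by norm_num [U]; ring
    have e6 : U α 5 - U α 4 = α := by norm_num [U]
    have f1 : |(-α : ℝ)| = α := by rw [abs_neg, abs_of_pos hα0]
    have f2 : |2 * α - 1| = 1 - 2 * α := by
      rw [abs_of_neg (by linarith : 2 * α - 1 < 0)]; ring
    have f4 : |α| = α := abs_of_pos hα0
    have f5 : |1 - 2 * α| = 1 - 2 * α := abs_of_pos (by linarith)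
    rw [Finset.sum_insert (by norm_num), Finset.sum_insert (by norm_num),
      Finset.sum_insert (by norm_num), Finset.sum_insert (by norm_num),
      Finset.sum_insert (by norm_num), Finset.sum_singleton]
    simp only [Int.reduceNeg, Int.reduceAdd]
    rw [e1, e2, e3, e4, e5, e6, f1, f2, f4, f5]
    ring
  -- fluxC values
  have hd0 : U α (0 + 1) - U α 0 = 2 * α - 1 := by norm_num [U]; ring
  have hAD0 : fluxAD a (U α) 0 < 0 := by
    unfold fluxAD; rw [hd0]
    exact mul_neg_of_pos_of_neg (by positivity) (by linarith)
  have hC0 : fluxC a lam (U α) 0 = -(|a| / 8) := by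
    have hx' : U α (0 + 2) - U α (0 + 1) = U α 0 - U α (0 - 1) := by norm_num [U]; ring
    have h0' : lam⁻¹ * (U α 0 - U α (0 - 1)) ≤ 0 := by
      rw [show U α 0 - U α (0 - 1) = -α by norm_num [U]]
      have := inv_pos.mpr hlam
      nlinarith
    have hle' : fluxAD a (U α) 0 ≤ lam⁻¹ * (U α 0 - U α (0 - 1)) := by
      unfold fluxAD
      rw [hd0, show U α 0 - U α (0 - 1) = -α by norm_num [U],
        show lam⁻¹ * (-α) = -(lam⁻¹ * α) by ring, hlaminv]
      nlinarith
    rw [fluxC_eval_neg a lam (U α) 0 hAD0 hx' h0' hle',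
      show U α 0 - U α (0 - 1) = -α by norm_num [U],
      show lam⁻¹ * (-α) = -(lam⁻¹ * α) by ring, hlaminv]
  have hd3 : U α (3 + 1) - U α 3 = 1 - 2 * α := by norm_num [U]; ring
  have hAD3 : 0 < fluxAD a (U α) 3 := by
    unfold fluxAD; rw [hd3]
    exact mul_pos (by positivity) (by linarith)
  have hC3 : fluxC a lam (U α) 3 = |a| / 8 := by
    have hx' : U α (3 + 2) - U α (3 + 1) = U α 3 - U α (3 - 1) := by norm_num [U] <;> ring
    have h0' : 0 ≤ lam⁻¹ * (U α 3 - U α (3 - 1)) := by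
      rw [show U α 3 - U α (3 - 1) = α by norm_num [U]]
      positivity
    have hle' : lam⁻¹ * (U α 3 - U α (3 - 1)) ≤ fluxAD a (U α) 3 := by
      unfold fluxAD
      rw [hd3, show U α 3 - U α (3 - 1) = α by norm_num [U], hlaminv]
      nlinarith
    rw [fluxC_eval_pos a lam (U α) 3 hAD3 hx' h0' hle',
      show U α 3 - U α (3 - 1) = α by norm_num [U], hlaminv]
  have hCm1 : fluxC a lam (U α) (-1) = 0 := by
    apply fluxC_zero_left
    rw [show U α (-1) - U α (-1 - 1) = 0 by norm_num [U]]
    simp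
  have hC1 : fluxC a lam (U α) 1 = 0 := by
    apply fluxC_zero_right
    have hAD1 : fluxAD a (U α) 1 < 0 := by
      unfold fluxAD; rw [show U α (1 + 1) - U α 1 = -α by norm_num [U]; ring]
      exact mul_neg_of_pos_of_neg (by positivity) (by linarith)
    rw [Real.sign_of_neg hAD1, show U α (1 + 2) - U α (1 + 1) = α by norm_num [U]]
    have := inv_pos.mpr hlam
    nlinarith
  have hC2 : fluxC a lam (U α) 2 = 0 := by
    apply fluxC_zero_left
    have hAD2 : 0 < fluxAD a (U α) 2 := by
      unfold fluxAD; rw [show U α (2 + 1) - U α 2 = α by norm_num [U]]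
      exact mul_pos (by positivity) hα0
    rw [Real.sign_of_pos hAD2, show U α 2 - U α (2 - 1) = -α by norm_num [U]; ring]
    have := inv_pos.mpr hlam
    nlinarith
  have hC4 : fluxC a lam (U α) 4 = 0 := by
    apply fluxC_zero_right
    rw [show U α (4 + 2) - U α (4 + 1) = 0 by norm_num [U]]
    simp
  have hCm2 : fluxC a lam (U α) (-2) = 0 := fluxC_const _ _ _ _ (by norm_num [U])
  have hCm3 : fluxC a lam (U α) (-3) = 0 := fluxC_const _ _ _ _ (by norm_num [U])
  have hC5 : fluxC a lam (U α) 5 = 0 := fluxC_const _ _ _ _ (by norm_num [U])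
  have hC6 : fluxC a lam (U α) 6 = 0 := fluxC_const _ _ _ _ (by norm_num [U])
  refine ⟨U α, by rw [hU_TV]; exact ENNReal.ofReal_lt_top, ?_⟩
  set V := fun j : ℤ => U α j - lam * (numFlux a lam (U α) j - numFlux a lam (U α) (j - 1))
    with hV_def
  rcases lt_or_gt_of_ne ha with hneg | hpos
  · -- a < 0
    have habs : |a| = -a := abs_of_neg hneg
    have hma : -1 ≤ lam * a := by rw [habs] at hCFL; linarith
    have hm0 : lam * a < 0 := mul_neg_of_pos_of_neg hlam hneg
    have hF : ∀ j, numFlux a lam (U α) j = a * U α (j + 1) + fluxC a lam (U α) j := by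
      intro j; unfold numFlux; rw [habs]; ring
    have hVval : ∀ j : ℤ, V j = U α j - lam * a * (U α (j + 1) - U α j)
        - lam * (fluxC a lam (U α) j - fluxC a lam (U α) (j - 1)) := by
      intro j; simp only [hV_def]; rw [hF j, hF (j - 1)]
      norm_num
      ring
    have hVm2 : V (-2) = 0 := by rw [hVval]; norm_num [U, hCm2, hCm3]
    have hVm1 : V (-1) = lam * a * α := by
      rw [hVval]; norm_num [U, hCm1, hCm2] <;> (rw [hα_def, habs]; ring)
    have hV0 : V 0 = lam * a - 2 * lam * a * α := by
      rw [hVval]; norm_num [U, hC0, hCm1]; rw [hα_def, habs]; ring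
    have hV1 : V 1 = -1 + lam * a * α := by
      rw [hVval]; norm_num [U, hC1, hC0]; rw [hα_def, habs]; ring
    have hV2 : V 2 = -1 - lam * a * α := by
      rw [hVval]; norm_num [U, hC2, hC1] <;> (rw [hα_def, habs]; ring)
    have hV3 : V 3 = -1 - lam * a + 2 * lam * a * α := by
      rw [hVval]; norm_num [U, hC3, hC2] <;> (rw [hα_def, habs]; ring)
    have hV4 : V 4 = -(lam * a * α) := by
      rw [hVval]; norm_num [U, hC4, hC3] <;> (rw [hα_def, habs]; ring)
    have hV5 : V 5 = 0 := by rw [hVval]; norm_num [U, hC5, hC4]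
    have hsum : ENNReal.ofReal (2 - 4 * (lam * a) * α) ≤ TV V := by
      have hle : ENNReal.ofReal (2 - 4 * (lam * a) * α)
          = ∑ j ∈ ({-2, -1, 0, 1, 2, 3, 4} : Finset ℤ), ENNReal.ofReal |V (j + 1) - V j| := by
        rw [← ENNReal.ofReal_sum_of_nonneg (by intro i _; positivity)]
        congr 1
        rw [Finset.sum_insert (by norm_num), Finset.sum_insert (by norm_num),
          Finset.sum_insert (by norm_num), Finset.sum_insert (by norm_num),
          Finset.sum_insert (by norm_num), Finset.sum_insert (by norm_num),
          Finset.sum_singleton]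
        simp only [Int.reduceNeg, Int.reduceAdd]
        rw [hVm2, hVm1, hV0, hV1, hV2, hV3, hV4, hV5]
        rw [abs_of_nonpos (show lam * a * α - 0 ≤ 0 by nlinarith),
          abs_of_nonpos (show lam * a - 2 * lam * a * α - lam * a * α ≤ 0 by nlinarith),
          abs_of_nonpos (show -1 + lam * a * α - (lam * a - 2 * lam * a * α) ≤ 0 by nlinarith),
          abs_of_nonneg (show 0 ≤ -1 - lam * a * α - (-1 + lam * a * α) by nlinarith),
          abs_of_nonneg (show 0 ≤ -1 - lam * a + 2 * lam * a * α - (-1 - lam * a * α) by nlinarith),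
          abs_of_nonneg (show 0 ≤ -(lam * a * α) - (-1 - lam * a + 2 * lam * a * α) by nlinarith),
          abs_of_nonpos (show 0 - -(lam * a * α) ≤ 0 by nlinarith)]
        ring
      calc ENNReal.ofReal (2 - 4 * (lam * a) * α)
          = ∑ j ∈ ({-2, -1, 0, 1, 2, 3, 4} : Finset ℤ), ENNReal.ofReal |V (j + 1) - V j| := hle
        _ ≤ TV V := by unfold TV; exact ENNReal.sum_le_tsum _
    refine lt_of_lt_of_le ?_ hsum
    rw [hU_TV, ENNReal.ofReal_lt_ofReal_iff (by nlinarith)]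
    nlinarith
  · -- a > 0
    have habs : |a| = a := abs_of_pos hpos
    have hma : lam * a ≤ 1 := by rw [habs] at hCFL; linarith
    have hm0 : 0 < lam * a := mul_pos hlam hpos
    have hF : ∀ j, numFlux a lam (U α) j = a * U α j + fluxC a lam (U α) j := by
      intro j; unfold numFlux; rw [habs]; ring
    have hVval : ∀ j : ℤ, V j = U α j - lam * a * (U α j - U α (j - 1))
        - lam * (fluxC a lam (U α) j - fluxC a lam (U α) (j - 1)) := by
      intro j; simp only [hV_def]; rw [hF j, hF (j - 1)]
      ring
    have hVm1 : V (-1) = 0 := by rw [hVval]; norm_num [U, hCm1, hCm2]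
    have hV0 : V 0 = lam * a * α := by
      rw [hVval]; norm_num [U, hC0, hCm1]; rw [hα_def, habs]; ring
    have hV1 : V 1 = -1 + lam * a - 2 * lam * a * α := by
      rw [hVval]; norm_num [U, hC1, hC0]; rw [hα_def, habs]; ring
    have hV2 : V 2 = -1 + lam * a * α := by
      rw [hVval]; norm_num [U, hC2, hC1] <;> (rw [hα_def, habs]; ring)
    have hV3 : V 3 = -1 - lam * a * α := by
      rw [hVval]; norm_num [U, hC3, hC2] <;> (rw [hα_def, habs]; ring)
    have hV4 : V 4 = -(lam * a) + 2 * lam * a * α := by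
      rw [hVval]; norm_num [U, hC4, hC3] <;> (rw [hα_def, habs]; ring)
    have hV5 : V 5 = -(lam * a * α) := by
      rw [hVval]; norm_num [U, hC5, hC4] <;> (rw [hα_def, habs]; ring)
    have hV6 : V 6 = 0 := by rw [hVval]; norm_num [U, hC6, hC5]
    have hsum : ENNReal.ofReal (2 + 4 * (lam * a) * α) ≤ TV V := by
      have hle : ENNReal.ofReal (2 + 4 * (lam * a) * α)
          = ∑ j ∈ ({-1, 0, 1, 2, 3, 4, 5} : Finset ℤ), ENNReal.ofReal |V (j + 1) - V j| := by
        rw [← ENNReal.ofReal_sum_of_nonneg (by intro i _; positivity)]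
        congr 1
        rw [Finset.sum_insert (by norm_num), Finset.sum_insert (by norm_num),
          Finset.sum_insert (by norm_num), Finset.sum_insert (by norm_num),
          Finset.sum_insert (by norm_num), Finset.sum_insert (by norm_num),
          Finset.sum_singleton]
        simp only [Int.reduceNeg, Int.reduceAdd]
        rw [hVm1, hV0, hV1, hV2, hV3, hV4, hV5, hV6]
        have hP : 0 ≤ lam * a * α := mul_nonneg hm0.le hα0.le
        have h3p : 3 * (lam * a * α) ≤ lam * a := by
          have h := mul_nonneg hm0.le (show (0:ℝ) ≤ 1 - 3 * α by linarith)
          have e : lam * a * (1 - 3 * α) = lam * a - 3 * (lam * a * α) := by ring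
          linarith
        rw [abs_of_nonneg (show (0:ℝ) ≤ lam * a * α - 0 by linarith),
          abs_of_nonpos (show -1 + lam * a - 2 * lam * a * α - lam * a * α ≤ 0 by linarith),
          abs_of_nonpos (show -1 + lam * a * α - (-1 + lam * a - 2 * lam * a * α) ≤ 0 by linarith),
          abs_of_nonpos (show -1 - lam * a * α - (-1 + lam * a * α) ≤ 0 by linarith),
          abs_of_nonneg (show 0 ≤ -(lam * a) + 2 * lam * a * α - (-1 - lam * a * α) by linarith),
          abs_of_nonneg (show 0 ≤ -(lam * a * α) - (-(lam * a) + 2 * lam * a * α) by linarith),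
          abs_of_nonneg (show 0 ≤ 0 - -(lam * a * α) by linarith)]
        ring
      calc ENNReal.ofReal (2 + 4 * (lam * a) * α)
          = ∑ j ∈ ({-1, 0, 1, 2, 3, 4, 5} : Finset ℤ), ENNReal.ofReal |V (j + 1) - V j| := hle
        _ ≤ TV V := by unfold TV; exact ENNReal.sum_le_tsum _
    refine lt_of_lt_of_le ?_ hsum
    rw [hU_TV, ENNReal.ofReal_lt_ofReal_iff (by nlinarith)]
    linarith [mul_pos hm0 hα0]
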